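/- Define the modified fractional integral Î₋^μ u(x) = (1+x)^{-μ} I₋^μ u(x) for μ > 0. Then for every n ∈ ℕ₀, Î₋^μ P_n(x) = [n!/Γ(n+μ+1)] P_n^{(-μ,μ)}(x), which is a polynomial of degree n; consequently, Î₋^μ maps the space of polynomials of degree ≤ N into itself. -/

import Mathlib

open Real Filter Set

/-- Left-sided Riemann–Liouville fractional integral of order `ρ` with base point `a`. -/
noncomputable def fracInt (a ρ : ℝ) (u : ℝ → ℝ) (x : ℝ) : ℝ :=
  (1 / Real.Gamma ρ) * ∫ y in a..x, u y * (x - y) ^ (ρ - 1)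

/-- Left-sided Caputo fractional derivative of order `μ ∈ (k-1,k)` with base point `a`. -/
noncomputable def caputoD (k : ℕ) (μ a : ℝ) (u : ℝ → ℝ) : ℝ → ℝ :=
  fracInt a ((k : ℝ) - μ) (iteratedDeriv k u)

/-- Left-sided Riemann–Liouville fractional derivative of order `μ ∈ (k-1,k)` with base point `a`. -/
noncomputable def rlD (k : ℕ) (μ a : ℝ) (u : ℝ → ℝ) : ℝ → ℝ :=
  iteratedDeriv k (fracInt a ((k : ℝ) - μ) u)

/-- Jacobi polynomial `P_n^{(α,β)}` for general real parameters, via the terminating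
hypergeometric representation. -/
noncomputable def jacobiP (n : ℕ) (α β : ℝ) (x : ℝ) : ℝ :=
  (1 / (n.factorial : ℝ)) * ∑ m ∈ Finset.range (n + 1),
    (n.choose m : ℝ) * (∏ i ∈ Finset.range (n - m), (α + m + 1 + i)) *
    (∏ i ∈ Finset.range m, (α + β + n + 1 + i)) * ((x - 1) / 2) ^ m

/-- Legendre polynomial. -/
noncomputable def legendreP (n : ℕ) (x : ℝ) : ℝ := jacobiP n 0 0 x

/-- Modified fractional integral `Î₋^μ u(x) = (1+x)^{-μ} I₋^μ u(x)`. -/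
noncomputable def fracIntHat (μ : ℝ) (u : ℝ → ℝ) (x : ℝ) : ℝ :=
  (1 + x) ^ (-μ) * fracInt (-1) μ u x

section Aux

open Finset MeasureTheory intervalIntegral

lemma aux_prod_shift (m k : ℕ) : (∏ i ∈ range k, ((m:ℝ)+1+i)) = (m+k).factorial / m.factorial := by
  induction k with
  | zero =>
    rw [Finset.prod_range_zero, Nat.add_zero, div_self (by positivity)]
  | succ k ih =>
    rw [Finset.prod_range_succ, ih]
    have h : ((m+k).factorial : ℝ) ≠ 0 := by positivity
    have h2 : ((m+(k+1)).factorial : ℝ) = (m+k).factorial * ((m:ℝ)+1+k) := by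
      have h3 : m + (k+1) = (m+k) + 1 := by ring
      rw [h3, Nat.factorial_succ]
      push_cast; ring
    rw [h2]
    field_simp

lemma aux_Gamma_prod (c : ℝ) (hc : 0 < c) (k : ℕ) :
    Real.Gamma (c + k) = (∏ i ∈ range k, (c + i)) * Real.Gamma c := by
  induction k with
  | zero => simp
  | succ k ih =>
    have h1 : c + (k+1:ℕ) = (c + k) + 1 := by push_cast; ring
    rw [h1, Real.Gamma_add_one (by positivity), ih, Finset.prod_range_succ]
    ring

lemma aux_vdm (N : ℕ) (a b : ℝ) :
    ∑ s ∈ range (N+1), (N.choose s : ℝ) * (∏ i ∈ range s, (a+i)) * (∏ i ∈ range (N-s), (b+i))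
      = ∏ i ∈ range N, (a+b+i) := by
  induction N with
  | zero => simp
  | succ N ih =>
    set A : ℕ → ℝ := fun s => ∏ i ∈ range s, (a+i) with hA
    set B : ℕ → ℝ := fun s => ∏ i ∈ range s, (b+i) with hB
    rw [Finset.prod_range_succ, ← ih, Finset.sum_mul]
    have hR : ∑ s ∈ range (N+1), (N.choose s : ℝ) * A s * B (N-s) * (a+b+N)
        = (∑ s ∈ range (N+1), (N.choose s : ℝ) * A (s+1) * B (N-s))
          + ∑ s ∈ range (N+1), (N.choose s : ℝ) * A s * B (N+1-s) := by
      rw [← Finset.sum_add_distrib]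
      refine Finset.sum_congr rfl fun s hs => ?_
      rw [Finset.mem_range] at hs
      have h1 : N + 1 - s = (N - s) + 1 := by omega
      rw [h1]
      simp only [hA, hB, Finset.prod_range_succ]
      have hcast : ((N - s : ℕ) : ℝ) = (N:ℝ) - s := by
        push_cast [Nat.cast_sub (by omega : s ≤ N)]; ring
      rw [hcast]
      ring
    rw [hR]
    have hL : ∑ s ∈ range (N+1+1), ((N+1).choose s : ℝ) * A s * B (N+1-s)
        = (∑ s ∈ range (N+1), (N.choose s : ℝ) * A (s+1) * B (N-s))
          + ∑ s ∈ range (N+1), (N.choose s : ℝ) * A s * B (N+1-s) := by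
      rw [Finset.sum_range_succ' _ (N+1)]
      have h2 : ∀ s ∈ range (N+1), ((N+1).choose (s+1) : ℝ) * A (s+1) * B (N+1-(s+1))
          = (N.choose s : ℝ) * A (s+1) * B (N-s) + (N.choose (s+1) : ℝ) * A (s+1) * B (N-s) := by
        intro s hs
        have h3 : N + 1 - (s+1) = N - s := by omega
        rw [h3, Nat.choose_succ_succ]
        push_cast; ring
      rw [Finset.sum_congr rfl h2, Finset.sum_add_distrib, add_assoc]
      congr 1
      have h4 : ∑ s ∈ range (N+1), (N.choose (s+1) : ℝ) * A (s+1) * B (N-s)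
            + ((N+1).choose 0 : ℝ) * A 0 * B (N+1-0)
          = ∑ s ∈ range (N+1+1), (N.choose s : ℝ) * A s * B (N+1-s) := by
        rw [Finset.sum_range_succ' (fun s => (N.choose s : ℝ) * A s * B (N+1-s)) (N+1)]
        congr 1
        · refine Finset.sum_congr rfl fun s hs => ?_
          rw [Finset.mem_range] at hs
          have h5 : N + 1 - (s+1) = N - s := by omega
          rw [h5]
        · simp
      rw [h4, Finset.sum_range_succ]
      simp
    rw [hL]

lemma aux_neg_one_pow_eq (n k : ℕ) (h : k ≤ n) : ((-1:ℝ))^(n+k) = (-1)^(n-k) := by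
  have h2 : n + k = (n - k) + 2*k := by omega
  rw [h2, pow_add, pow_mul]
  norm_num

lemma aux_reflect (n : ℕ) (μ x : ℝ) :
    jacobiP n (-μ) μ x = (1/(n.factorial:ℝ)) * ∑ k ∈ range (n+1),
      (-1)^(n+k) * (n.choose k : ℝ) * (∏ i ∈ range (n-k), (μ+k+1+i)) *
      ((n+k).factorial / n.factorial) * ((1+x)/2)^k := by
  rw [jacobiP]
  congr 1
  set v : ℝ := (1+x)/2 with hv
  have step1 : ∀ m ∈ range (n+1),
      (n.choose m : ℝ) * (∏ i ∈ range (n - m), (-μ + m + 1 + i)) *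
        (∏ i ∈ range m, (-μ + μ + n + 1 + i)) * ((x - 1) / 2) ^ m
      = ∑ k ∈ range (n+1), (n.choose m : ℝ) * (∏ i ∈ range (n - m), (-μ + m + 1 + i)) *
          ((n+m).factorial / n.factorial) * (v^k * (-1)^(m-k) * (m.choose k : ℝ)) := by
    intro m hm
    rw [Finset.mem_range] at hm
    have e1 : (∏ i ∈ range m, (-μ + μ + n + 1 + i)) = ((n+m).factorial / n.factorial : ℝ) := by
      rw [← aux_prod_shift n m]
      exact Finset.prod_congr rfl fun i _ => by ring
    have e2 : ((x - 1) / 2 : ℝ) ^ m = ∑ k ∈ range (m+1), v^k * (-1)^(m-k) * (m.choose k : ℝ) := by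
      have h3 : ((x-1)/2 : ℝ) = v + (-1) := by rw [hv]; ring
      rw [h3, add_pow]
    rw [e1, e2, Finset.mul_sum]
    rw [Finset.sum_subset (Finset.range_subset_range.mpr (by omega : m+1 ≤ n+1))]
    intro k _ hk
    rw [Finset.mem_range, not_lt] at hk
    rw [Nat.choose_eq_zero_of_lt (show m < k by omega)]
    simp
  rw [Finset.sum_congr rfl step1, Finset.sum_comm]
  refine Finset.sum_congr rfl fun k hk => ?_
  rw [Finset.mem_range] at hk
  have hkn : k ≤ n := by omega
  set N := n - k with hN
  have hsplit : n + 1 = k + (N + 1) := by omega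
  rw [hsplit, Finset.sum_range_add]
  have hzero : ∀ m ∈ range k,
      (n.choose m : ℝ) * (∏ i ∈ range (n - m), (-μ + m + 1 + i)) *
        ((n+m).factorial / n.factorial) * (v^k * (-1)^(m-k) * (m.choose k : ℝ)) = 0 := by
    intro m hm
    rw [Finset.mem_range] at hm
    rw [Nat.choose_eq_zero_of_lt (show m < k by omega)]
    simp
  rw [Finset.sum_congr rfl hzero, Finset.sum_const_zero, zero_add]
  have hterm : ∀ s ∈ range (N+1),
      (n.choose (k+s) : ℝ) * (∏ i ∈ range (n - (k+s)), (-μ + ((k+s:ℕ):ℝ) + 1 + i)) *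
        ((n+(k+s)).factorial / n.factorial) * (v^k * (-1)^((k+s)-k) * ((k+s).choose k : ℝ))
      = ((-1)^(n-k) * (n.choose k : ℝ) * ((n+k).factorial / n.factorial) * v^k)
        * ((N.choose s : ℝ) * (∏ i ∈ range s, ((n:ℝ)+k+1+i)) * (∏ i ∈ range (N-s), ((μ-n)+i))) := by
    intro s hs
    rw [Finset.mem_range] at hs
    have hsN : s ≤ N := by omega
    have hb : (n.choose (k+s) : ℝ) * ((k+s).choose k : ℝ) = (n.choose k : ℝ) * (N.choose s : ℝ) := by
      have h4 := Nat.choose_mul (n := n) (k := k+s) (s := k) (by omega)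
      have h2 : k + s - k = s := by omega
      rw [h2] at h4
      exact_mod_cast congrArg (Nat.cast : ℕ → ℝ) h4
    have ha : (k+s) - k = s := by omega
    have hc : (∏ i ∈ range (n - (k+s)), (-μ + ((k+s:ℕ):ℝ) + 1 + i))
        = (-1:ℝ)^(N-s) * ∏ i ∈ range (N-s), ((μ-n)+i) := by
      have hL : n - (k+s) = N - s := by omega
      rw [hL]
      rw [← Finset.prod_range_reflect (fun i => ((μ-(n:ℝ))+i)) (N-s)]
      have h5 : ∀ i ∈ range (N-s), ((μ-(n:ℝ)) + ((N-s-1-i : ℕ):ℝ)) = -(-μ + ((k+s:ℕ):ℝ) + 1 + i) := by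
        intro i hi
        rw [Finset.mem_range] at hi
        have c1 : ((N-s-1-i : ℕ) : ℝ) = (N:ℝ) - s - 1 - i := by
          rw [Nat.cast_sub (by omega), Nat.cast_sub (by omega), Nat.cast_sub (by omega)]
          push_cast
          ring
        have cN : (N:ℝ) = (n:ℝ) - k := by rw [hN, Nat.cast_sub hkn]
        rw [c1, cN]
        push_cast
        ring
      rw [Finset.prod_congr rfl h5]
      rw [Finset.prod_congr rfl (fun i (_ : i ∈ range (N-s)) =>
        (neg_eq_neg_one_mul (-μ + ((k+s:ℕ):ℝ) + 1 + i)))]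
      rw [Finset.prod_mul_distrib, Finset.prod_const, Finset.card_range]
      rw [← mul_assoc, ← pow_add]
      have he : (-1:ℝ)^((N-s)+(N-s)) = 1 := by
        rw [← two_mul, pow_mul]
        norm_num
      rw [he, one_mul]
    have hd : (((n+(k+s)).factorial : ℝ) / n.factorial)
        = ((n+k).factorial / n.factorial : ℝ) * ∏ i ∈ range s, ((n:ℝ)+k+1+i) := by
      have h1 : (∏ i ∈ range (k+s), ((n:ℝ)+1+i)) = ((n+(k+s)).factorial : ℝ) / n.factorial := by
        rw [aux_prod_shift n (k+s)]
      have h2 : (∏ i ∈ range k, ((n:ℝ)+1+i)) = ((n+k).factorial : ℝ) / n.factorial := by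
        rw [aux_prod_shift n k]
      rw [← h1, ← h2, Finset.prod_range_add]
      congr 1
      exact Finset.prod_congr rfl fun i _ => by push_cast; ring
    rw [ha, hc, hd]
    have hsign : (-1:ℝ)^(N-s) * (-1:ℝ)^s = (-1)^(n-k) := by
      rw [← pow_add]
      congr 1
      omega
    set M : ℝ := (∏ i ∈ range (N-s), ((μ-(n:ℝ))+i)) * (((n+k).factorial : ℝ) / n.factorial)
      * (∏ i ∈ range s, ((n:ℝ)+k+1+i)) * v^k with hM
    linear_combination (((-1:ℝ))^(N-s) * (-1:ℝ)^s * M) * hb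
      + ((n.choose k : ℝ) * (N.choose s : ℝ) * M) * hsign
  rw [Finset.sum_congr rfl hterm, ← Finset.mul_sum, aux_vdm N ((n:ℝ)+k+1) (μ-(n:ℝ))]
  have hfin : (∏ i ∈ range N, ((n:ℝ)+k+1+(μ-n)+i)) = ∏ i ∈ range (n-k), (μ+k+1+i) := by
    rw [← hN]
    exact Finset.prod_congr rfl fun i _ => by ring
  rw [hfin, ← aux_neg_one_pow_eq n k hkn]
  ring

variable {μ x : ℝ}

lemma aux_integrable_sing (hμ : 0 < μ) (x : ℝ) (m : ℕ) :
    IntervalIntegrable (fun y => (1+y)^m * (x-y)^(μ-1)) volume (-1) x := by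
  have h1 : IntervalIntegrable (fun t : ℝ => t ^ (μ-1)) volume (x+1) 0 :=
    intervalIntegral.intervalIntegrable_rpow' (by linarith)
  have h2 := h1.comp_sub_left x
  have e1 : x - (x+1) = -1 := by ring
  have e2 : x - 0 = x := by ring
  rw [e1, e2] at h2
  exact h2.continuousOn_mul (Continuous.continuousOn (by continuity))

lemma aux_cont_rpow (hμ : 0 < μ) : Continuous fun t : ℝ => t ^ μ :=
  continuous_iff_continuousAt.mpr fun t => Real.continuousAt_rpow_const t μ (Or.inr hμ.le)

lemma aux_ftc_base (hμ : 0 < μ) (hx : -1 < x) :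
    ∫ y in (-1:ℝ)..x, (x-y)^(μ-1) = (1+x)^μ / μ := by
  have hint : IntervalIntegrable (fun y => (-μ) * (x-y)^(μ-1)) volume (-1) x := by
    have := (aux_integrable_sing hμ x 0).const_mul (-μ)
    simpa using this
  have key := intervalIntegral.integral_eq_sub_of_hasDeriv_right_of_le (f := fun y => (x-y)^μ)
    (f' := fun y => (-μ) * (x-y)^(μ-1)) (le_of_lt hx)
    (((aux_cont_rpow hμ).comp (continuous_const.sub continuous_id)).continuousOn)
    (fun y hy => by
      have hxy : x - y ≠ 0 := by rw [Set.mem_Ioo] at hy; intro h; nlinarith [hy.2]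
      have hd : HasDerivAt (fun y : ℝ => x - y) (-1) y := (hasDerivAt_id y).const_sub x
      have hr := hd.rpow_const (p := μ) (Or.inl hxy)
      have h2 : -1 * μ * (x - y) ^ (μ-1) = (-μ) * (x-y)^(μ-1) := by ring
      rw [h2] at hr
      exact hr.hasDerivWithinAt)
    hint
  simp only [sub_self, Real.zero_rpow (ne_of_gt hμ), zero_sub] at key
  rw [intervalIntegral.integral_const_mul] at key
  have e3 : x - (-1) = 1 + x := by ring
  rw [e3] at key
  rw [eq_div_iff (ne_of_gt hμ)]
  linarith

lemma aux_ftc_step (hμ : 0 < μ) (hx : -1 < x) (m : ℕ) :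
    μ * ∫ y in (-1:ℝ)..x, (1+y)^(m+1) * (x-y)^(μ-1)
      = (m+1) * ∫ y in (-1:ℝ)..x, (1+y)^m * (x-y)^μ := by
  have hint1 : IntervalIntegrable (fun y => ((m:ℝ)+1) * ((1+y)^m * (x-y)^μ)) volume (-1) x := by
    apply ContinuousOn.intervalIntegrable
    apply Continuous.continuousOn
    exact (continuous_const.mul (((continuous_const.add continuous_id).pow m).mul
      ((aux_cont_rpow hμ).comp (continuous_const.sub continuous_id))))
  have hint2 : IntervalIntegrable (fun y => μ * ((1+y)^(m+1) * (x-y)^(μ-1))) volume (-1) x :=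
    (aux_integrable_sing hμ x (m+1)).const_mul μ
  have key := intervalIntegral.integral_eq_sub_of_hasDeriv_right_of_le
    (f := fun y => (1+y)^(m+1) * (x-y)^μ)
    (f' := fun y => ((m:ℝ)+1) * ((1+y)^m * (x-y)^μ) - μ * ((1+y)^(m+1) * (x-y)^(μ-1)))
    (le_of_lt hx)
    ((((continuous_const.add continuous_id).pow (m+1)).mul
      ((aux_cont_rpow hμ).comp (continuous_const.sub continuous_id))).continuousOn)
    (fun y hy => by
      rw [Set.mem_Ioo] at hy
      have hxy : x - y ≠ 0 := by intro h; nlinarith [hy.2]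
      have hd : HasDerivAt (fun y : ℝ => x - y) (-1) y := (hasDerivAt_id y).const_sub x
      have hr := hd.rpow_const (p := μ) (Or.inl hxy)
      have hp := ((hasDerivAt_id y).const_add 1).pow (m+1)
      simp only [id_eq, Nat.add_sub_cancel, Nat.cast_add, Nat.cast_one, mul_one] at hp
      have hF := hp.mul hr
      have h2 : ((m:ℝ)+1) * (1+y)^m * (x-y)^μ + (1+y)^(m+1) * (-1 * μ * (x-y)^(μ-1))
          = ((m:ℝ)+1) * ((1+y)^m * (x-y)^μ) - μ * ((1+y)^(m+1) * (x-y)^(μ-1)) := by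
        ring
      simp only [Pi.pow_apply] at hF
      rw [h2] at hF
      exact hF.hasDerivWithinAt)
    (hint1.sub hint2)
  have hz1 : ((1:ℝ)+x)^(m+1) * (x-x)^μ = 0 := by
    rw [sub_self, Real.zero_rpow (ne_of_gt hμ)]; ring
  have hz2 : ((1:ℝ)+(-1))^(m+1) * (x-(-1))^μ = 0 := by
    norm_num
  rw [intervalIntegral.integral_sub hint1 hint2, intervalIntegral.integral_const_mul,
    intervalIntegral.integral_const_mul] at key
  simp only [hz1, hz2] at key
  linarith

lemma aux_J_val (x : ℝ) (hx : -1 < x) :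
    ∀ (m : ℕ) (μ : ℝ), 0 < μ → ∫ y in (-1:ℝ)..x, (1+y)^m * (x-y)^(μ-1)
      = ((m.factorial : ℝ) / ∏ i ∈ range (m+1), (μ+i)) * (1+x)^(μ+m) := by
  intro m
  induction m with
  | zero =>
    intro μ hμ
    simp only [pow_zero, one_mul, Nat.factorial_zero, Nat.cast_one, Finset.prod_range_one,
      Nat.cast_zero, add_zero]
    rw [aux_ftc_base hμ hx, Finset.prod_range_one]
    norm_num
    rw [div_eq_inv_mul]
  | succ m ih =>
    intro μ hμ
    have hs := aux_ftc_step hμ hx (μ := μ) m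
    have hμ1 : (0:ℝ) < μ + 1 := by linarith
    have ih1 := ih (μ+1) hμ1
    have e1 : ∀ y : ℝ, (1+y)^m * (x-y)^μ = (1+y)^m * (x-y)^((μ+1)-1) := by
      intro y; norm_num
    rw [intervalIntegral.integral_congr (fun y _ => e1 y)] at hs
    rw [ih1] at hs
    have hprodpos : (0:ℝ) < ∏ i ∈ range (m+1), (μ+1+i) := by
      apply Finset.prod_pos; intro i _; positivity
    have hprod : ∏ i ∈ range (m+1+1), (μ+i) = μ * ∏ i ∈ range (m+1), (μ+1+i) := by
      rw [Finset.prod_range_succ']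
      simp only [Nat.cast_add, Nat.cast_one, Nat.cast_zero, add_zero]
      rw [mul_comm]
      congr 1
      apply Finset.prod_congr rfl
      intro i _; ring
    have hexp : μ + 1 + (m:ℝ) = μ + ((m:ℕ)+1:ℕ) := by push_cast; ring
    rw [hexp] at hs
    have hfac : ((m+1).factorial : ℝ) = (m.factorial : ℝ) * (m+1) := by
      rw [Nat.factorial_succ]; push_cast; ring
    rw [hprod, hfac]
    have h9 : μ * ∫ y in (-1:ℝ)..x, (1+y)^(m+1) * (x-y)^(μ-1)
        = ((m:ℝ)+1) * ((m.factorial : ℝ) / ∏ i ∈ range (m+1), (μ+1+i)) * (1+x)^(μ+((m:ℕ)+1:ℕ)) := by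
      rw [hs]; ring
    have hμne : μ ≠ 0 := ne_of_gt hμ
    field_simp at h9 ⊢
    linarith

lemma aux_key (hμ : 0 < μ) (M : ℕ) (b : ℕ → ℝ) (x : ℝ) (hx : -1 < x) :
    fracIntHat μ (fun y => ∑ m ∈ range M, b m * (1+y)^m) x
      = ∑ m ∈ range M, b m * ((m.factorial : ℝ) / Real.Gamma (μ+m+1)) * (1+x)^m := by
  rw [fracIntHat, fracInt]
  have hI : (∫ y in (-1:ℝ)..x, (∑ m ∈ range M, b m * (1+y)^m) * (x - y)^(μ-1))
      = ∑ m ∈ range M, b m * (((m.factorial:ℝ) / ∏ i ∈ range (m+1), (μ+i)) * (1+x)^(μ+m)) := by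
    rw [intervalIntegral.integral_congr
      (g := fun y => ∑ m ∈ range M, b m * ((1+y)^m * (x-y)^(μ-1)))
      (fun y _ => by rw [Finset.sum_mul]; exact Finset.sum_congr rfl fun m _ => by ring)]
    rw [intervalIntegral.integral_finset_sum
      (fun m _ => (aux_integrable_sing hμ x m).const_mul (b m))]
    exact Finset.sum_congr rfl fun m _ => by
      rw [intervalIntegral.integral_const_mul, aux_J_val x hx m μ hμ]
  rw [hI, Finset.mul_sum, Finset.mul_sum]
  refine Finset.sum_congr rfl fun m hm => ?_
  have h1 : (0:ℝ) < 1 + x := by linarith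
  have hG : Real.Gamma (μ+m+1) = (∏ i ∈ range (m+1), (μ+i)) * Real.Gamma μ := by
    rw [← aux_Gamma_prod μ hμ (m+1)]
    congr 1
    push_cast; ring
  have hP : (0:ℝ) < ∏ i ∈ range (m+1), (μ+i) :=
    Finset.prod_pos fun i _ => by positivity
  have hxp : (1+x)^(-μ) * (1+x)^(μ+(m:ℝ)) = (1+x)^m := by
    rw [← Real.rpow_add h1]
    have : -μ + (μ + (m:ℝ)) = (m:ℝ) := by ring
    rw [this, Real.rpow_natCast]
  have hGpos := Real.Gamma_pos_of_pos hμ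
  rw [hG]
  linear_combination (b m * (m.factorial:ℝ) / ((∏ i ∈ range (m+1), (μ+i)) * Real.Gamma μ)) * hxp

lemma aux_legendre_exp (n : ℕ) :
    legendreP n = fun y => ∑ m ∈ range (n+1),
      ((1/(n.factorial:ℝ)) * ((-1)^(n+m) * (n.choose m : ℝ) * ((n.factorial:ℝ)/m.factorial)
        * (((n+m).factorial : ℝ) / n.factorial) * (1/2)^m)) * (1+y)^m := by
  funext y
  rw [legendreP]
  have h := aux_reflect n 0 y
  rw [neg_zero] at h
  rw [h, Finset.mul_sum]
  refine Finset.sum_congr rfl fun m hm => ?_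
  rw [Finset.mem_range] at hm
  have hp : (∏ i ∈ range (n-m), ((0:ℝ)+m+1+i)) = (n.factorial:ℝ)/m.factorial := by
    have h2 : (∏ i ∈ range (n-m), ((m:ℝ)+1+i)) = ((m+(n-m)).factorial:ℝ)/m.factorial :=
      aux_prod_shift m (n-m)
    rw [show m+(n-m) = n by omega] at h2
    rw [← h2]
    exact Finset.prod_congr rfl fun i _ => by ring
  rw [hp]
  have h3 : ((1+y)/2:ℝ)^m = (1+y)^m * (1/2)^m := by
    rw [div_eq_mul_one_div, mul_pow]
  rw [h3]
  ring

end Aux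

theorem stmt12 (μ : ℝ) (hμ : 0 < μ) :
    (∀ n : ℕ, ∀ x ∈ Set.Ioo (-1 : ℝ) 1,
      fracIntHat μ (legendreP n) x
        = (n.factorial : ℝ) / Real.Gamma (n + μ + 1) * jacobiP n (-μ) μ x) ∧
    (∀ n : ℕ, ∃ q : Polynomial ℝ, q.natDegree = n ∧ ∀ x : ℝ, jacobiP n (-μ) μ x = q.eval x) ∧
    (∀ N : ℕ, ∀ p : Polynomial ℝ, p.natDegree ≤ N →
      ∃ q : Polynomial ℝ, q.natDegree ≤ N ∧
        ∀ x ∈ Set.Ioo (-1 : ℝ) 1, fracIntHat μ (fun y => p.eval y) x = q.eval x) := by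
  refine ⟨?_, ?_, ?_⟩
  · -- part 1
    intro n x hx
    rw [Set.mem_Ioo] at hx
    rw [aux_legendre_exp n, aux_key hμ (n+1) _ x hx.1, aux_reflect n μ x,
      Finset.mul_sum, Finset.mul_sum]
    refine Finset.sum_congr rfl fun m hm => ?_
    rw [Finset.mem_range] at hm
    have hm' : m ≤ n := by omega
    have hG : Real.Gamma ((n:ℝ)+μ+1)
        = (∏ i ∈ Finset.range (n-m), (μ+(m:ℝ)+1+i)) * Real.Gamma (μ+m+1) := by
      rw [← aux_Gamma_prod (μ+(m:ℝ)+1) (by positivity) (n-m)]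
      congr 1
      rw [Nat.cast_sub hm']
      ring
    have hGm := Real.Gamma_pos_of_pos (show (0:ℝ) < μ+m+1 by positivity)
    have hP : (0:ℝ) < ∏ i ∈ Finset.range (n-m), (μ+(m:ℝ)+1+i) :=
      Finset.prod_pos fun i _ => by positivity
    have hnf : ((n.factorial:ℝ)) ≠ 0 := by positivity
    have hmf : ((m.factorial:ℝ)) ≠ 0 := by positivity
    have h3 : ((1+x)/2:ℝ)^m = (1+x)^m * (1/2)^m := by
      rw [div_eq_mul_one_div, mul_pow]
    rw [hG, h3]
    field_simp
  · -- part 2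
    intro n
    classical
    set e : ℕ → ℝ := fun m => (-1)^(n+m) * (n.choose m : ℝ)
      * (∏ i ∈ Finset.range (n-m), (μ+(m:ℝ)+1+i)) * (((n+m).factorial : ℝ) / n.factorial)
      * (1/2)^m with he
    refine ⟨Polynomial.C (1/(n.factorial:ℝ)) * ∑ m ∈ Finset.range (n+1),
      Polynomial.C (e m) * (Polynomial.X + Polynomial.C 1)^m, ?_, ?_⟩
    · -- natDegree = n
      have hdle : ∀ m ∈ Finset.range (n+1),
          (Polynomial.C (e m) * (Polynomial.X + Polynomial.C 1)^m).natDegree ≤ n := by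
        intro m hm
        rw [Finset.mem_range] at hm
        refine le_trans (Polynomial.natDegree_C_mul_le _ _) ?_
        refine le_trans (Polynomial.natDegree_pow_le) ?_
        rw [Polynomial.natDegree_X_add_C]
        omega
      have hup : (Polynomial.C (1/(n.factorial:ℝ)) * ∑ m ∈ Finset.range (n+1),
          Polynomial.C (e m) * (Polynomial.X + Polynomial.C 1)^m).natDegree ≤ n :=
        le_trans (Polynomial.natDegree_C_mul_le _ _)
          (Polynomial.natDegree_sum_le_of_forall_le _ _ hdle)
      refine le_antisymm hup ?_
      apply Polynomial.le_natDegree_of_ne_zero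
      rw [Polynomial.coeff_C_mul, Polynomial.finset_sum_coeff]
      have hcoeff : ∑ m ∈ Finset.range (n+1),
          (Polynomial.C (e m) * (Polynomial.X + Polynomial.C 1)^m).coeff n = e n := by
        rw [Finset.sum_eq_single_of_mem n (Finset.self_mem_range_succ n)]
        · rw [Polynomial.coeff_C_mul]
          have hmonic : ((Polynomial.X + Polynomial.C (1:ℝ))^n).Monic :=
            (Polynomial.monic_X_add_C 1).pow n
          have hdeg : ((Polynomial.X + Polynomial.C (1:ℝ))^n).natDegree = n := by
            rw [Polynomial.natDegree_pow, Polynomial.natDegree_X_add_C, mul_one]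
          have := hmonic.coeff_natDegree
          rw [hdeg] at this
          rw [this, mul_one]
        · intro m hm hne
          rw [Finset.mem_range] at hm
          apply Polynomial.coeff_eq_zero_of_natDegree_lt
          have h6 : (Polynomial.C (e m) * (Polynomial.X + Polynomial.C 1)^m).natDegree ≤ m := by
            refine le_trans (Polynomial.natDegree_C_mul_le _ _) ?_
            refine le_trans Polynomial.natDegree_pow_le ?_
            rw [Polynomial.natDegree_X_add_C]
            omega
          omega
      rw [hcoeff]
      have hen : e n = (((n+n).factorial : ℝ) / n.factorial) * (1/2)^n := by
        rw [he]
        simp only [Nat.choose_self, Nat.cast_one, Nat.sub_self, Finset.range_zero,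
          Finset.prod_empty]
        have : ((-1:ℝ))^(n+n) = 1 := by
          rw [← two_mul, pow_mul]; norm_num
        rw [this]
        ring
      rw [hen]
      positivity
    · -- eval
      intro x
      rw [aux_reflect n μ x]
      rw [Polynomial.eval_mul, Polynomial.eval_C, Polynomial.eval_finset_sum]
      congr 1
      refine Finset.sum_congr rfl fun m hm => ?_
      rw [Polynomial.eval_mul, Polynomial.eval_C, Polynomial.eval_pow, Polynomial.eval_add,
        Polynomial.eval_X, Polynomial.eval_C, he]
      have h3 : ((1+x)/2:ℝ)^m = (x+1)^m * (1/2)^m := by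
        rw [div_eq_mul_one_div, mul_pow]
        ring_nf
      rw [h3]
      ring
  · -- part 3
    intro N p hp
    classical
    set r : Polynomial ℝ := p.comp (Polynomial.X - Polynomial.C 1) with hr
    have hrdeg : r.natDegree ≤ N := by
      refine le_trans Polynomial.natDegree_comp_le ?_
      rw [Polynomial.natDegree_X_sub_C, mul_one]
      exact hp
    have hpeval : ∀ y : ℝ, p.eval y = ∑ m ∈ Finset.range (N+1), r.coeff m * (1+y)^m := by
      intro y
      have h1 : r.eval (1+y) = p.eval y := by
        rw [hr, Polynomial.eval_comp]
        congr 1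
        simp
      rw [← h1, Polynomial.eval_eq_sum_range' (lt_of_le_of_lt hrdeg (Nat.lt_succ_self N))]
    refine ⟨∑ m ∈ Finset.range (N+1),
      Polynomial.C (r.coeff m * ((m.factorial:ℝ) / Real.Gamma (μ+m+1)))
        * (Polynomial.X + Polynomial.C 1)^m, ?_, ?_⟩
    · refine Polynomial.natDegree_sum_le_of_forall_le _ _ fun m hm => ?_
      rw [Finset.mem_range] at hm
      refine le_trans (Polynomial.natDegree_C_mul_le _ _) ?_
      refine le_trans Polynomial.natDegree_pow_le ?_
      rw [Polynomial.natDegree_X_add_C]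
      omega
    · intro x hx
      rw [Set.mem_Ioo] at hx
      have hfun : (fun y => p.eval y)
          = fun y => ∑ m ∈ Finset.range (N+1), r.coeff m * (1+y)^m := funext hpeval
      rw [hfun, aux_key hμ (N+1) _ x hx.1, Polynomial.eval_finset_sum]
      refine Finset.sum_congr rfl fun m hm => ?_
      rw [Polynomial.eval_mul, Polynomial.eval_C, Polynomial.eval_pow, Polynomial.eval_add,
        Polynomial.eval_X, Polynomial.eval_C]
      rw [show (1:ℝ)+x = x+1 by ring]
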